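/- arXiv:1112.2312 — 4 statements merged into one kernel-verified Lean document; each statement's English description precedes it below -/
import Mathlib

section
/- Let P be a graded poset in which every element has degree at most 1 and every element of degree 1 covers exactly two distinct elements of degree 0 (i.e. P is the face poset of a 1-dimensional regular CW-complex), and let M′ be a Morse matching on P. Then there exists a rayless Morse matching M on P such that C_M(P) = C_{M′}(P) ∪ {c_{[r]} : [r] ∈ R_{M′}(P)}, where the c_{[r]} are elements of P \ C_{M′}(P), c_{[r]} ≠ c_{[r′]} whenever [r] ≠ [r′], and deg(c_{[r]}) = 0 for all [r]. (No finiteness assumption on R_{M′}(P) is made.) -/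
/-- A directed simple path of length `n` in the digraph with arrow relation `A`:
a sequence `p 0, …, p n` of pairwise distinct vertices with an arrow from each
vertex to the next. -/
def IsPathOn {V : Type*} (A : V → V → Prop) (n : ℕ) (p : ℕ → V) : Prop :=
  (∀ i j, i ≤ n → j ≤ n → p i = p j → i = j) ∧ ∀ i, i < n → A (p i) (p (i + 1))

/-- A digraph is acyclic if no directed simple path can be closed up by an arrow
from its last vertex to its first. -/
def DAcyclic {V : Type*} (A : V → V → Prop) : Prop :=
  ¬ ∃ (n : ℕ) (p : ℕ → V), IsPathOn A n p ∧ A (p n) (p 0)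

/-- A (directed) ray: pairwise distinct vertices `r 0, r 1, …` with an arrow from
`r i` to `r (i+1)` for every `i`. -/
def IsRay {V : Type*} (A : V → V → Prop) (r : ℕ → V) : Prop :=
  Function.Injective r ∧ ∀ i : ℕ, A (r i) (r (i + 1))

/-- A digraph is rayless if it contains no ray. -/
def Rayless {V : Type*} (A : V → V → Prop) : Prop := ¬ ∃ r : ℕ → V, IsRay A r

/-- Two rays are equivalent if they coincide from some point on. -/
def RayEquiv {V : Type*} (r s : ℕ → V) : Prop :=
  ∃ M N : ℕ, ∀ i : ℕ, r (M + i) = s (N + i)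

/-- The ray `r` has a bypass starting at `r n`: a directed simple path, not
contained in `r`, from `r n` to `r (n + k)` for some `k > 0`. -/
def HasBypassAt {V : Type*} (A : V → V → Prop) (r : ℕ → V) (n : ℕ) : Prop :=
  ∃ k : ℕ, 0 < k ∧ ∃ (m : ℕ) (p : ℕ → V), IsPathOn A m p ∧ p 0 = r n ∧
    p m = r (n + k) ∧ ∃ i ≤ m, ∀ j : ℕ, p i ≠ r j

/-- A multiray: a ray having bypasses starting arbitrarily far along it. -/
def IsMultiray {V : Type*} (A : V → V → Prop) (r : ℕ → V) : Prop :=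
  IsRay A r ∧ ∀ N : ℕ, ∃ i : ℕ, HasBypassAt A r (N + i)

/-- The family of equivalence classes of rays of the digraph `A`. -/
def RayClasses {V : Type*} (A : V → V → Prop) : Set (Set (ℕ → V)) :=
  {C | ∃ r : ℕ → V, IsRay A r ∧ C = {s | IsRay A s ∧ RayEquiv r s}}

section Poset

variable {P : Type*} [PartialOrder P]

/-- A chain contained in the principal ideal `x↓`. -/
def IsChainIn (x : P) (C : Set P) : Prop := C ⊆ Set.Iic x ∧ IsChain (· ≤ ·) C

/-- A maximal chain in the principal ideal `x↓`. -/
def IsMaxChainIn (x : P) (C : Set P) : Prop :=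
  IsChainIn x C ∧ ∀ D : Set P, IsChainIn x D → C ⊆ D → C = D

/-- `P` is graded with degree function `deg`: for every `x`, every maximal chain
in `x↓` is finite of length `deg x` (i.e. cardinality `deg x + 1`). -/
def GradedDeg (deg : P → ℕ) : Prop :=
  ∀ x : P, ∀ C : Set P, IsMaxChainIn x C → C.Finite ∧ C.ncard = deg x + 1

/-- A matching on the Hasse diagram of `P`: a set of arrows `(x, y)` (where `x`
covers `y`) no two of which share a vertex. -/
def IsMatching (M : Set (P × P)) : Prop :=
  (∀ e ∈ M, e.2 ⋖ e.1) ∧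
  ∀ e ∈ M, ∀ f ∈ M, e ≠ f → e.1 ≠ f.1 ∧ e.1 ≠ f.2 ∧ e.2 ≠ f.1 ∧ e.2 ≠ f.2

/-- The arrow relation of the digraph `H_M(P)`, obtained from the Hasse diagram
of `P` by reversing the arrows belonging to `M`. -/
def HasseM (M : Set (P × P)) (x y : P) : Prop :=
  (y ⋖ x ∧ (x, y) ∉ M) ∨ (y, x) ∈ M

/-- A Morse matching: a matching `M` on the Hasse diagram such that `H_M(P)` is
acyclic. -/
def IsMorse (M : Set (P × P)) : Prop := IsMatching M ∧ DAcyclic (HasseM M)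

/-- An element is critical for `M` if it is matched with no other element. -/
def Critical (M : Set (P × P)) (x : P) : Prop := ∀ e ∈ M, e.1 ≠ x ∧ e.2 ≠ x

/-- The set of critical elements of the matching `M`. -/
def Crit (M : Set (P × P)) : Set P := {x | Critical M x}

/-- The degree of a ray `r`: the minimal degree of an element appearing on `r`. -/
noncomputable def rayDeg (deg : P → ℕ) (r : ℕ → P) : ℕ := sInf {i | ∃ j : ℕ, deg (r j) = i}

/-- `M₊(x)`: if `x` is matched with an element `z` of degree `deg x + 1`, the set
of elements `y ≠ x` covered by `z`; otherwise empty. -/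
def Mplus (M : Set (P × P)) (deg : P → ℕ) (x : P) : Set P :=
  {y | ∃ z : P, (z, x) ∈ M ∧ deg z = deg x + 1 ∧ y ≠ x ∧ y ⋖ z}

/-- The stages `Dₖ(x)` of the construction of `D_M(x)`. -/
def Dk (M : Set (P × P)) (deg : P → ℕ) (x : P) : ℕ → Set P
  | 0 => {x}
  | (k + 1) => Dk M deg x k ∪ ⋃ y ∈ Dk M deg x k, Mplus M deg y

/-- The vertex set of the digraph `D_M(x)`. -/
def Dset (M : Set (P × P)) (deg : P → ℕ) (x : P) : Set P := ⋃ k : ℕ, Dk M deg x k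

/-- The arrow relation of the digraph `D_M(x)`: an arrow from `y` to each element
of `M₊(y)`. -/
def DArrow (M : Set (P × P)) (deg : P → ℕ) (x : P) (y z : P) : Prop :=
  y ∈ Dset M deg x ∧ z ∈ Mplus M deg y

/-- `L_M(x)`: the length of the longest directed simple path in `D_M(x)`. -/
noncomputable def LM (M : Set (P × P)) (deg : P → ℕ) (x : P) : ℕ :=
  sSup {n | ∃ p : ℕ → P, IsPathOn (DArrow M deg x) n p ∧ ∀ i ≤ n, p i ∈ Dset M deg x}

end Poset

/-- `P` is the face poset of a 1-dimensional regular CW-complex: every element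
has degree at most 1 and every element of degree 1 covers exactly two distinct
elements of degree 0. -/
def OneDim {P : Type*} [PartialOrder P] (deg : P → ℕ) : Prop :=
  (∀ x : P, deg x ≤ 1) ∧
  ∀ x : P, deg x = 1 → ∃ a b : P, a ≠ b ∧ deg a = 0 ∧ deg b = 0 ∧
    a ⋖ x ∧ b ⋖ x ∧ ∀ y : P, y ⋖ x → y = a ∨ y = b


set_option linter.unusedSectionVars false

section AuxLemmas
variable {P : Type*} [PartialOrder P]

lemma rayEquiv_refl (r : ℕ → P) : RayEquiv r r := ⟨0, 0, fun _ => rfl⟩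

lemma rayEquiv_symm {r s : ℕ → P} (h : RayEquiv r s) : RayEquiv s r := by
  obtain ⟨A, B, h⟩ := h; exact ⟨B, A, fun i => (h i).symm⟩

lemma rayEquiv_trans {r s u : ℕ → P} (h1 : RayEquiv r s) (h2 : RayEquiv s u) :
    RayEquiv r u := by
  obtain ⟨A, B, h1⟩ := h1; obtain ⟨C, D, h2⟩ := h2
  refine ⟨A + C, D + B, fun i => ?_⟩
  calc r (A + C + i) = s (B + (C + i)) := by
        rw [show A + C + i = A + (C + i) from by ring]; exact h1 (C + i)
    _ = u (D + B + i) := by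
        rw [show B + (C + i) = C + (B + i) from by ring, h2 (B + i),
          show D + (B + i) = D + B + i from by ring]

lemma exists_maxChainIn (x : P) : ∃ C, IsMaxChainIn x C ∧ x ∈ C := by
  have hzorn := zorn_subset_nonempty {C : Set P | IsChainIn x C ∧ x ∈ C} ?_ {x}
    ⟨⟨Set.singleton_subset_iff.mpr (Set.mem_Iic.mpr le_rfl),
      Set.subsingleton_singleton.isChain⟩, rfl⟩
  · obtain ⟨m, hxm, hmem, hmax⟩ := hzorn
    refine ⟨m, ⟨hmem.1, fun D hD hmD => ?_⟩, hmem.2⟩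
    exact Set.Subset.antisymm hmD (hmax ⟨hD, hmD hmem.2⟩ hmD)
  · intro c hcS hchain hcne
    obtain ⟨c0, hc0⟩ := hcne
    refine ⟨⋃₀ c, ⟨⟨?_, ?_⟩, Set.mem_sUnion.mpr ⟨c0, hc0, (hcS hc0).2⟩⟩,
      fun s hs => Set.subset_sUnion_of_mem hs⟩
    · exact Set.sUnion_subset fun s hs => (hcS hs).1.1
    · intro a ha b hb hab
      obtain ⟨sa, hsa, ha⟩ := ha; obtain ⟨sb, hsb, hb⟩ := hb
      rcases hchain.total hsa hsb with h | h
      · exact (hcS hsb).1.2 (h ha) hb hab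
      · exact (hcS hsa).1.2 ha (h hb) hab

lemma deg_covby {deg : P → ℕ} (hg : GradedDeg deg) {x y : P} (h : y ⋖ x) :
    deg x = deg y + 1 := by
  obtain ⟨C, hC, hyC⟩ := exists_maxChainIn y
  obtain ⟨hCfin, hCcard⟩ := hg y C hC
  have hxC : x ∉ C := fun hx => absurd (Set.mem_Iic.mp (hC.1.1 hx)) (fun hle => lt_irrefl _ (lt_of_lt_of_le h.lt hle))
  have hmax : IsMaxChainIn x (insert x C) := by
    constructor
    · constructor
      · intro a ha
        rcases ha with rfl | ha
        · exact Set.mem_Iic.mpr le_rfl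
        · exact Set.mem_Iic.mpr ((Set.mem_Iic.mp (hC.1.1 ha)).trans h.le)
      · exact hC.1.2.insert fun b hb _ =>
          Or.inr ((Set.mem_Iic.mp (hC.1.1 hb)).trans h.le)
    · intro D hD hsub
      refine Set.Subset.antisymm hsub fun d hd => ?_
      by_cases hdx : d = x
      · exact hdx ▸ Set.mem_insert x C
      · have hyD : y ∈ D := hsub (Set.mem_insert_of_mem x hyC)
        have hcomp : ∀ a ∈ D, a ≠ x → a ≤ y := by
          intro a haD hax
          have hax' : a ≤ x := Set.mem_Iic.mp (hD.1 haD)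
          rcases eq_or_ne a y with rfl | hay
          · exact le_rfl
          · rcases hD.2 haD hyD hay with h' | h'
            · exact h'
            · rcases lt_or_eq_of_le h' with h'' | h''
              · exact absurd (lt_of_le_of_ne hax' hax) (h.2 h'')
              · exact h''.ge
        have hCeq : C = D \ {x} := by
          apply hC.2
          · constructor
            · rintro a ⟨haD, hax⟩
              exact Set.mem_Iic.mpr (hcomp a haD (by simpa using hax))
            · rintro a ⟨haD, -⟩ b ⟨hbD, -⟩ hab
              exact hD.2 haD hbD hab
          · intro a haC
            exact ⟨hsub (Set.mem_insert_of_mem x haC),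
              fun h' => hxC ((by simpa using h' : a = x) ▸ haC)⟩
        have : d ∈ D \ {x} := ⟨hd, by simpa using hdx⟩
        rw [← hCeq] at this
        exact Set.mem_insert_of_mem x this
  obtain ⟨-, hcard2⟩ := hg x (insert x C) hmax
  rw [Set.ncard_insert_of_notMem hxC hCfin, hCcard] at hcard2
  omega

variable {deg : P → ℕ} {M' : Set (P × P)}

lemma mem_matching_deg (hg : GradedDeg deg) (h1 : OneDim deg) (hm : IsMatching M')
    {a b : P} (hab : (a, b) ∈ M') : b ⋖ a ∧ deg a = 1 ∧ deg b = 0 := by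
  have hcov : b ⋖ a := hm.1 _ hab
  have h2 := deg_covby hg hcov
  have h3 := h1.1 a
  exact ⟨hcov, by omega, by omega⟩

lemma matching_unique_fst (hm : IsMatching M') {a b c : P}
    (h1 : (a, b) ∈ M') (h2 : (a, c) ∈ M') : b = c := by
  by_contra hne
  exact (hm.2 _ h1 _ h2 (fun h => hne (congrArg Prod.snd h))).1 rfl

lemma matching_unique_snd (hm : IsMatching M') {a b c : P}
    (h1 : (a, c) ∈ M') (h2 : (b, c) ∈ M') : a = b := by
  by_contra hne
  exact (hm.2 _ h1 _ h2 (fun h => hne (congrArg Prod.fst h))).2.2.2 rfl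

lemma vertex_succ (hg : GradedDeg deg) {v w : P} (hv : deg v = 0)
    (h : HasseM M' v w) : (w, v) ∈ M' := by
  rcases h with ⟨hcov, -⟩ | h
  · have := deg_covby hg hcov; omega
  · exact h

lemma edge_succ (hg : GradedDeg deg) (h1 : OneDim deg) (hm : IsMatching M')
    {e v w : P} (he : (e, v) ∈ M') (h : HasseM M' e w) :
    w ⋖ e ∧ (e, w) ∉ M' ∧ deg w = 0 ∧ w ≠ v := by
  obtain ⟨hve, hde, hdv⟩ := mem_matching_deg hg h1 hm he
  rcases h with ⟨hcov, hnot⟩ | h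
  · have hdw := deg_covby hg hcov
    exact ⟨hcov, hnot, by omega, fun hwv => hnot (hwv ▸ he)⟩
  · obtain ⟨-, -, hde0⟩ := mem_matching_deg hg h1 hm h
    omega

lemma edge_succ_unique (h1 : OneDim deg) {e v w w' : P} (hde : deg e = 1)
    (hv : v ⋖ e) (hw : w ⋖ e) (hw' : w' ⋖ e) (hwv : w ≠ v) (hw'v : w' ≠ v) :
    w = w' := by
  obtain ⟨a, b, hab, -, -, -, -, huniq⟩ := h1.2 e hde
  have h1v := huniq v hv
  have h2w := huniq w hw
  have h3w := huniq w' hw'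
  rcases h1v with h|h <;> rcases h2w with h'|h' <;> rcases h3w with h''|h'' <;> grind

lemma ray_determined (hg : GradedDeg deg) (h1 : OneDim deg) (hm : IsMatching M')
    {r s : ℕ → P} (hr : IsRay (HasseM M') r) (hs : IsRay (HasseM M') s)
    {i j : ℕ} (hi : 1 ≤ i) (hj : 1 ≤ j) (hij : r i = s j) :
    RayEquiv r s := by
  obtain ⟨i', rfl⟩ : ∃ i', i = i' + 1 := ⟨i - 1, by omega⟩
  obtain ⟨j', rfl⟩ : ∃ j', j = j' + 1 := ⟨j - 1, by omega⟩
  refine ⟨i' + 1, j' + 1, fun k => ?_⟩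
  induction k with
  | zero => simpa using hij
  | succ k ih =>
    have hx : r (i' + 1 + k) = s (j' + 1 + k) := ih
    have hdx : deg (r (i' + 1 + k)) = 0 ∨ deg (r (i' + 1 + k)) = 1 := by
      have := h1.1 (r (i' + 1 + k)); omega
    have hgoal : r (i' + 1 + k + 1) = s (j' + 1 + k + 1) → r (i' + 1 + (k+1)) = s (j' + 1 + (k+1)) := by
      intro h
      rwa [show i' + 1 + k + 1 = i' + 1 + (k+1) from by ring,
        show j' + 1 + k + 1 = j' + 1 + (k+1) from by ring] at h
    apply hgoal
    rcases hdx with hdx | hdx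
    · have h1' : (r (i' + 1 + k + 1), r (i' + 1 + k)) ∈ M' :=
        vertex_succ hg hdx (hr.2 (i' + 1 + k))
      have h2' : (s (j' + 1 + k + 1), s (j' + 1 + k)) ∈ M' :=
        vertex_succ hg (by rw [← hx]; exact hdx) (hs.2 (j' + 1 + k))
      rw [← hx] at h2'
      exact matching_unique_snd hm h1' h2'
    · have hre : HasseM M' (r (i' + k)) (r (i' + 1 + k)) := by
        have := hr.2 (i' + k)
        rwa [show i' + k + 1 = i' + 1 + k from by ring] at this
      have hrm : (r (i' + 1 + k), r (i' + k)) ∈ M' := by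
        rcases hre with ⟨hcov, -⟩ | h
        · have ha := deg_covby hg hcov
          have hb := h1.1 (r (i' + k)); omega
        · exact h
      have hse : HasseM M' (s (j' + k)) (s (j' + 1 + k)) := by
        have := hs.2 (j' + k)
        rwa [show j' + k + 1 = j' + 1 + k from by ring] at this
      have hsm : (s (j' + 1 + k), s (j' + k)) ∈ M' := by
        rcases hse with ⟨hcov, -⟩ | h
        · have hc := deg_covby hg hcov
          have h2 : deg (s (j' + 1 + k)) = 1 := by rw [← hx]; exact hdx
          have := h1.1 (s (j' + k)); omega
        · exact h
      obtain ⟨hcr, -, -, hner⟩ := edge_succ hg h1 hm hrm (hr.2 (i' + 1 + k))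
      obtain ⟨hcs, -, -, hnes⟩ := edge_succ hg h1 hm hsm (hs.2 (j' + 1 + k))
      rw [← hx] at hsm hcs
      have hveq : s (j' + k) = r (i' + k) := matching_unique_fst hm hsm hrm
      rw [hveq] at hnes
      exact edge_succ_unique h1 hdx (mem_matching_deg hg h1 hm hrm).1 hcr hcs hner hnes

lemma ray_step (hg : GradedDeg deg) (h1 : OneDim deg) (hm : IsMatching M')
    {s : ℕ → P} (hs : IsRay (HasseM M') s) {m : ℕ} (hm0 : deg (s m) = 0) :
    (s (m+1), s m) ∈ M' ∧ s (m+2) ⋖ s (m+1) ∧ (s (m+1), s (m+2)) ∉ M' ∧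
      deg (s (m+2)) = 0 := by
  have h1' := vertex_succ hg hm0 (hs.2 m)
  obtain ⟨hcov, hnot, hdeg, -⟩ := edge_succ hg h1 hm h1' (hs.2 (m+1))
  exact ⟨h1', hcov, hnot, hdeg⟩

lemma ray_structure (hg : GradedDeg deg) (h1 : OneDim deg) (hm : IsMatching M')
    {s : ℕ → P} (hs : IsRay (HasseM M') s) {n : ℕ} (hn : deg (s n) = 0) (k : ℕ) :
    deg (s (n + 2*k)) = 0 ∧ (s (n + 2*k + 1), s (n + 2*k)) ∈ M' ∧
      s (n + 2*k + 2) ⋖ s (n + 2*k + 1) ∧ (s (n + 2*k + 1), s (n + 2*k + 2)) ∉ M' := by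
  induction k with
  | zero =>
    have h0 : deg (s (n + 2*0)) = 0 := by simpa using hn
    have := ray_step hg h1 hm hs h0
    exact ⟨h0, this.1, this.2.1, this.2.2.1⟩
  | succ k ih =>
    have hdeg : deg (s (n + 2*(k+1))) = 0 := by
      have := (ray_step hg h1 hm hs ih.1).2.2.2
      rwa [show n + 2*k + 2 = n + 2*(k+1) from by ring] at this
    have := ray_step hg h1 hm hs hdeg
    exact ⟨hdeg, this.1, this.2.1, this.2.2.1⟩

lemma ray_vertex (hg : GradedDeg deg) (h1 : OneDim deg) (hm : IsMatching M')
    {s : ℕ → P} (hs : IsRay (HasseM M') s) : ∃ t, 1 ≤ t ∧ deg (s t) = 0 := by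
  rcases hs.2 0 with ⟨hcov, -⟩ | h
  · have ha := deg_covby hg hcov
    have hb := h1.1 (s 0)
    rw [show (0:ℕ)+1 = 1 from rfl] at ha
    exact ⟨1, le_rfl, by omega⟩
  · obtain ⟨-, -, hdeg, -⟩ := edge_succ hg h1 hm h (hs.2 1)
    exact ⟨2, by omega, hdeg⟩

end AuxLemmas

section Surgery
set_option linter.unusedSectionVars false
variable {P : Type*} [PartialOrder P] {deg : P → ℕ} {M' : Set (P × P)}
variable {ι : Type*}

/-- The surgery on the matching `M'` along the family of tails `r`. -/
def Surg (M' : Set (P × P)) (r : ι → ℕ → P) : Set (P × P) :=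
  {p | (p ∈ M' ∧ ∀ C i, p ≠ (r C (2*i+1), r C (2*i))) ∨
       ∃ C i, p = (r C (2*i+1), r C (2*i+2))}

lemma mem_Surg {M' : Set (P × P)} {r : ι → ℕ → P} {p : P × P} :
    p ∈ Surg M' r ↔ (p ∈ M' ∧ ∀ C i, p ≠ (r C (2*i+1), r C (2*i))) ∨
      ∃ C i, p = (r C (2*i+1), r C (2*i+2)) := Iff.rfl

variable {r : ι → ℕ → P}

/-- The hypotheses on the family of tails. -/
structure TailFam (deg : P → ℕ) (M' : Set (P × P)) (r : ι → ℕ → P) : Prop where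
  key : ∀ C k, (r C (2*k+1), r C (2*k)) ∈ M' ∧ r C (2*k+2) ⋖ r C (2*k+1) ∧
      (r C (2*k+1), r C (2*k+2)) ∉ M' ∧ deg (r C (2*k)) = 0
  inj : ∀ C, Function.Injective (r C)
  cross : ∀ C C' : ι, C ≠ C' → ∀ i j, r C i ≠ r C' j

lemma TailFam.odd (hg : GradedDeg deg) (h1 : OneDim deg) (hm : IsMatching M')
    (ht : TailFam deg M' r) (C : ι) (i : ℕ) : deg (r C (2*i+1)) = 1 :=
  (mem_matching_deg hg h1 hm (ht.key C i).1).2.1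

lemma TailFam.cov0 (hg : GradedDeg deg) (h1 : OneDim deg) (hm : IsMatching M')
    (ht : TailFam deg M' r) (C : ι) (i : ℕ) : r C (2*i) ⋖ r C (2*i+1) :=
  (mem_matching_deg hg h1 hm (ht.key C i).1).1

lemma TailFam.old_avoid (hg : GradedDeg deg) (h1 : OneDim deg) (hm : IsMatching M')
    (ht : TailFam deg M' r) : ∀ p : P × P, p ∈ M' →
    (∀ C i, p ≠ (r C (2*i+1), r C (2*i))) → ∀ C j, p.1 ≠ r C j ∧ p.2 ≠ r C j := by
  intro p hp hnr C j
  obtain ⟨hcov, hd1, hd2⟩ := mem_matching_deg hg h1 hm (show (p.1, p.2) ∈ M' from hp)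
  constructor
  · intro h1e
    rcases Nat.even_or_odd j with ⟨i, hji⟩ | ⟨i, hji⟩
    · have h0 := (ht.key C i).2.2.2
      rw [show j = 2*i from by omega] at h1e
      rw [h1e] at hd1; omega
    · rw [show j = 2*i+1 from by omega] at h1e
      have hp' : (r C (2*i+1), p.2) ∈ M' := by rw [← h1e]; exact hp
      have h2 := matching_unique_fst hm hp' (ht.key C i).1
      exact hnr C i (by rw [Prod.ext_iff]; exact ⟨h1e, h2⟩)
  · intro h2e
    rcases Nat.even_or_odd j with ⟨i, hji⟩ | ⟨i, hji⟩
    · rw [show j = 2*i from by omega] at h2e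
      have hp' : (p.1, r C (2*i)) ∈ M' := by rw [← h2e]; exact hp
      have h2 := matching_unique_snd hm hp' (ht.key C i).1
      exact hnr C i (by rw [Prod.ext_iff]; exact ⟨h2, h2e⟩)
    · rw [show j = 2*i+1 from by omega] at h2e
      have h0 := ht.odd hg h1 hm C i
      rw [h2e] at hd2; omega

lemma TailFam.step (hg : GradedDeg deg) (h1 : OneDim deg) (hm : IsMatching M')
    (ht : TailFam deg M' r) : ∀ (C : ι) (j : ℕ) (y : P),
    HasseM (Surg M' r) (r C j) y → 1 ≤ j ∧ y = r C (j - 1) := by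
  intro C j y hy
  rcases hy with ⟨hcov, hnot⟩ | hmem
  · have hdj := deg_covby hg hcov
    obtain ⟨i, hji⟩ : ∃ i, j = 2*i+1 := by
      rcases Nat.even_or_odd j with ⟨i, hh⟩ | ⟨i, hh⟩
      · exfalso
        have h0 := (ht.key C i).2.2.2
        rw [show j = 2*i from by omega] at hdj; omega
      · exact ⟨i, by omega⟩
    subst hji
    obtain ⟨a, b, hab, -, -, -, -, huniq⟩ := h1.2 _ (ht.odd hg h1 hm C i)
    have hy1 := huniq y hcov
    have hy2 := huniq _ (ht.cov0 hg h1 hm C i)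
    have hy3 := huniq _ (ht.key C i).2.1
    have hne23 : r C (2*i) ≠ r C (2*i+2) := fun h => by have := ht.inj C h; omega
    have hyne : y ≠ r C (2*i+2) := by
      intro h
      exact hnot (mem_Surg.mpr (Or.inr ⟨C, i, by rw [Prod.ext_iff]; exact ⟨rfl, h⟩⟩))
    have hfin : y = r C (2*i) := by
      rcases hy2 with h2|h2 <;> rcases hy3 with h3|h3
      · exact absurd (h2.trans h3.symm) hne23
      · rcases hy1 with hy|hy
        · rw [hy, ← h2]
        · exact absurd (hy.trans h3.symm) hyne
      · rcases hy1 with hy|hy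
        · exact absurd (hy.trans h3.symm) hyne
        · rw [hy, ← h2]
      · exact absurd (h2.trans h3.symm) hne23
    exact ⟨by omega, by rw [hfin]; exact congrArg (r C) (by omega)⟩
  · rcases mem_Surg.mp hmem with ⟨hm1, hnr⟩ | ⟨C', i', heq⟩
    · exact absurd rfl (ht.old_avoid hg h1 hm _ hm1 hnr C j).2
    · have h1e : y = r C' (2*i'+1) := congrArg Prod.fst heq
      have h2e : r C j = r C' (2*i'+2) := congrArg Prod.snd heq
      have hCC : C = C' := by
        by_contra hne
        exact ht.cross C C' hne _ _ h2e
      subst hCC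
      have hj : j = 2*i'+2 := ht.inj C h2e
      subst hj
      exact ⟨by omega, by rw [h1e]; exact congrArg (r C) (by omega)⟩

lemma TailFam.off (ht : TailFam deg M' r) : ∀ x y : P,
    (∀ C j, x ≠ r C j) → (∀ C j, y ≠ r C j) →
    HasseM (Surg M' r) x y → HasseM M' x y := by
  intro x y hx hy h
  rcases h with ⟨hcov, hnot⟩ | hmem
  · refine Or.inl ⟨hcov, fun hmem' => ?_⟩
    exact hnot (mem_Surg.mpr (Or.inl ⟨hmem', fun C i hpe => hx C (2*i+1) (congrArg Prod.fst hpe)⟩))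
  · rcases mem_Surg.mp hmem with ⟨h', -⟩ | ⟨C, i, heq⟩
    · exact Or.inr h'
    · exact absurd (congrArg Prod.fst heq) (hy C (2*i+1))

lemma TailFam.desc (hg : GradedDeg deg) (h1 : OneDim deg) (hm : IsMatching M')
    (ht : TailFam deg M' r) : ∀ g : ℕ → P,
    (∀ m, HasseM (Surg M' r) (g m) (g (m+1))) → ∀ (C : ι) (j : ℕ), g 0 ≠ r C j := by
  intro g hgw C j0 h0
  have key : ∀ m, m ≤ j0 ∧ g m = r C (j0 - m) := by
    intro m
    induction m with
    | zero => exact ⟨Nat.zero_le _, by simpa using h0⟩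
    | succ m ih =>
      obtain ⟨hm', hgm⟩ := ih
      obtain ⟨h1le, hy⟩ := ht.step hg h1 hm C (j0 - m) (g (m+1)) (by rw [← hgm]; exact hgw m)
      refine ⟨by omega, ?_⟩
      have hidx : j0 - m - 1 = j0 - (m+1) := by omega
      rw [hy, hidx]
  obtain ⟨hcon, -⟩ := key (j0+1)
  omega

lemma TailFam.matching (hg : GradedDeg deg) (h1 : OneDim deg) (hm : IsMatching M')
    (ht : TailFam deg M' r) : IsMatching (Surg M' r) := by
  constructor
  · intro e he
    rcases mem_Surg.mp he with ⟨he', -⟩ | ⟨C, i, rfl⟩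
    · exact hm.1 e he'
    · exact (ht.key C i).2.1
  · intro e he f hf hef
    rcases mem_Surg.mp he with ⟨he', hner⟩ | ⟨C, i, rfl⟩
    · rcases mem_Surg.mp hf with ⟨hf', hnf⟩ | ⟨C', i', rfl⟩
      · exact hm.2 e he' f hf' hef
      · exact ⟨(ht.old_avoid hg h1 hm e he' hner C' (2*i'+1)).1,
          (ht.old_avoid hg h1 hm e he' hner C' (2*i'+2)).1,
          (ht.old_avoid hg h1 hm e he' hner C' (2*i'+1)).2,
          (ht.old_avoid hg h1 hm e he' hner C' (2*i'+2)).2⟩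
    · rcases mem_Surg.mp hf with ⟨hf', hnf⟩ | ⟨C', i', rfl⟩
      · exact ⟨Ne.symm (ht.old_avoid hg h1 hm f hf' hnf C (2*i+1)).1,
          Ne.symm (ht.old_avoid hg h1 hm f hf' hnf C (2*i+1)).2,
          Ne.symm (ht.old_avoid hg h1 hm f hf' hnf C (2*i+2)).1,
          Ne.symm (ht.old_avoid hg h1 hm f hf' hnf C (2*i+2)).2⟩
      · by_cases hCC : C = C'
        · subst hCC
          have hii : i ≠ i' := fun h => hef (by rw [h])
          refine ⟨?_, ?_, ?_, ?_⟩ <;> intro h <;> have := ht.inj C h <;> omega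
        · exact ⟨ht.cross C C' hCC _ _, ht.cross C C' hCC _ _,
            ht.cross C C' hCC _ _, ht.cross C C' hCC _ _⟩

lemma TailFam.acyclic (hg : GradedDeg deg) (h1 : OneDim deg) (hm : IsMatching M')
    (hacyc' : DAcyclic (HasseM M')) (ht : TailFam deg M' r) :
    DAcyclic (HasseM (Surg M' r)) := by
  rintro ⟨n, p, hp, hcl⟩
  have harrow : ∀ a, a ≤ n → HasseM (Surg M' r) (p a) (p ((a+1) % (n+1))) := by
    intro a ha
    rcases eq_or_lt_of_le ha with rfl | hlt
    · rw [Nat.mod_self]; exact hcl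
    · rw [Nat.mod_eq_of_lt (by omega)]; exact hp.2 a hlt
  by_cases htail : ∃ k, k ≤ n ∧ ∃ C j, p k = r C j
  · obtain ⟨k, hk, C, j, hkj⟩ := htail
    refine ht.desc hg h1 hm (fun m => p ((k + m) % (n+1))) ?_ C j ?_
    · intro m
      have hmod : (k + m) % (n+1) ≤ n := by
        have := Nat.mod_lt (k+m) (show 0 < n+1 from by omega); omega
      have harr := harrow _ hmod
      rwa [Nat.mod_add_mod] at harr
    · show p ((k + 0) % (n+1)) = r C j
      rw [Nat.mod_eq_of_lt (by omega)]
      exact hkj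
  · push_neg at htail
    refine hacyc' ⟨n, p, ⟨hp.1, fun i hi => ?_⟩, ?_⟩
    · exact ht.off _ _ (htail i (by omega)) (htail (i+1) (by omega)) (hp.2 i hi)
    · exact ht.off _ _ (htail n le_rfl) (htail 0 (by omega)) hcl

lemma TailFam.rayless (hg : GradedDeg deg) (h1 : OneDim deg) (hm : IsMatching M')
    (ht : TailFam deg M' r)
    (hmeet : ∀ s : ℕ → P, IsRay (HasseM M') s → ∃ C i j, s i = r C j) :
    Rayless (HasseM (Surg M' r)) := by
  rintro ⟨s, hs⟩
  by_cases htail : ∃ k C j, s k = r C j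
  · obtain ⟨k, C, j, hkj⟩ := htail
    exact ht.desc hg h1 hm (fun m => s (k + m)) (fun m => hs.2 (k + m)) C j hkj
  · push_neg at htail
    have hsM' : IsRay (HasseM M') s :=
      ⟨hs.1, fun i => ht.off _ _ (fun C j => htail i C j) (fun C j => htail (i+1) C j) (hs.2 i)⟩
    obtain ⟨C, i, j, hij⟩ := hmeet s hsM'
    exact htail i C j hij

lemma TailFam.crit (hg : GradedDeg deg) (h1 : OneDim deg) (hm : IsMatching M')
    (ht : TailFam deg M' r) :
    Crit (Surg M' r) = Crit M' ∪ Set.range (fun C : ι => r C 0) := by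
  ext x
  simp only [Crit, Set.mem_setOf_eq, Set.mem_union, Set.mem_range]
  constructor
  · intro hx
    by_cases hx' : Critical M' x
    · exact Or.inl hx'
    · right
      unfold Critical at hx'
      push_neg at hx'
      obtain ⟨e, he, himp⟩ := hx'
      have hor2 : e.1 = x ∨ e.2 = x := by tauto
      by_cases hrem : ∃ C i, e = (r C (2*i+1), r C (2*i))
      · obtain ⟨C, i, rfl⟩ := hrem
        have hor3 : r C (2*i+1) = x ∨ r C (2*i) = x := hor2
        have hnew : (r C (2*i+1), r C (2*i+2)) ∈ Surg M' r := mem_Surg.mpr (Or.inr ⟨C, i, rfl⟩)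
        rcases hor3 with h1x | h2x
        · exact absurd h1x (hx _ hnew).1
        · rcases i with _ | i''
          · exact ⟨C, by simpa using h2x⟩
          · exfalso
            have hnew2 : (r C (2*i''+1), r C (2*i''+2)) ∈ Surg M' r := mem_Surg.mpr (Or.inr ⟨C, i'', rfl⟩)
            apply (hx _ hnew2).2
            rw [show 2*i''+2 = 2*(i''+1) from by ring]
            exact h2x
      · push_neg at hrem
        have heM : e ∈ Surg M' r := mem_Surg.mpr (Or.inl ⟨he, fun C i h => hrem C i h⟩)
        have := hx e heM
        tauto
  · rintro (hx | ⟨C, rfl⟩)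
    · intro e he
      rcases mem_Surg.mp he with ⟨he', -⟩ | ⟨C, i, rfl⟩
      · exact hx e he'
      · refine ⟨(hx _ (ht.key C i).1).1, fun h => ?_⟩
        apply (hx _ (ht.key C (i+1)).1).2
        rw [show 2*(i+1) = 2*i+2 from by ring]
        exact h
    · intro e he
      rcases mem_Surg.mp he with ⟨he', hnr⟩ | ⟨C', i', rfl⟩
      · exact ⟨(ht.old_avoid hg h1 hm e he' hnr C 0).1,
          (ht.old_avoid hg h1 hm e he' hnr C 0).2⟩
      · constructor
        · intro h
          by_cases hCC : C' = C
          · subst hCC; have := ht.inj C' h; omega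
          · exact ht.cross C' C hCC _ _ h
        · intro h
          by_cases hCC : C' = C
          · subst hCC; have := ht.inj C' h; omega
          · exact ht.cross C' C hCC _ _ h

end Surgery
/-- on the face poset of a 1-dimensional regular CW-complex, any
Morse matching `M'` (with no finiteness assumption on the family of equivalence
classes of rays) may be replaced by a rayless Morse matching `M` whose critical
elements are those of `M'` plus one new element of degree 0 for each
equivalence class of rays of `M'`. -/
theorem stmt7 {P : Type*} [PartialOrder P] (deg : P → ℕ) (hgraded : GradedDeg deg)
    (h1 : OneDim deg) (M' : Set (P × P)) (hM' : IsMorse M') :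
    ∃ M : Set (P × P), IsMorse M ∧ Rayless (HasseM M) ∧
      ∃ c : RayClasses (HasseM M') → P, Function.Injective c ∧
        (∀ K : RayClasses (HasseM M'), c K ∉ Crit M') ∧
        (∀ K : RayClasses (HasseM M'), deg (c K) = 0) ∧
        Crit M = Crit M' ∪ Set.range c := by
  classical
  obtain ⟨hmatch', hacyc'⟩ := hM'
  have hex : ∀ C : RayClasses (HasseM M'), ∃ rr, IsRay (HasseM M') rr ∧
      (C : Set (ℕ → P)) = {s | IsRay (HasseM M') s ∧ RayEquiv rr s} := fun C => C.2
  choose ρ hρray hρC using hex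
  choose t ht1 htdeg using fun C => ray_vertex hgraded h1 hmatch' (hρray C)
  have hKey : ∀ (C : RayClasses (HasseM M')) (k : ℕ),
      (ρ C (t C + (2*k+1)), ρ C (t C + 2*k)) ∈ M' ∧
      ρ C (t C + (2*k+2)) ⋖ ρ C (t C + (2*k+1)) ∧
      (ρ C (t C + (2*k+1)), ρ C (t C + (2*k+2))) ∉ M' ∧
      deg (ρ C (t C + 2*k)) = 0 := by
    intro C k
    have h := ray_structure hgraded h1 hmatch' (hρray C) (htdeg C) k
    exact ⟨h.2.1, h.2.2.1, h.2.2.2, h.1⟩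
  set r : RayClasses (HasseM M') → ℕ → P := fun C i => ρ C (t C + i) with hrdef
  have htf : TailFam deg M' r := by
    constructor
    · intro C k
      exact hKey C k
    · intro C i j hij
      have := (hρray C).1 hij
      omega
    · intro C C' hne i j heq
      apply hne
      have hequiv : RayEquiv (ρ C) (ρ C') :=
        ray_determined hgraded h1 hmatch' (hρray C) (hρray C')
          (show 1 ≤ t C + i from by have := ht1 C; omega)
          (show 1 ≤ t C' + j from by have := ht1 C'; omega) heq
      apply Subtype.ext
      rw [hρC C, hρC C']
      ext u
      simp only [Set.mem_setOf_eq]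
      constructor
      · rintro ⟨hu, he⟩; exact ⟨hu, rayEquiv_trans (rayEquiv_symm hequiv) he⟩
      · rintro ⟨hu, he⟩; exact ⟨hu, rayEquiv_trans hequiv he⟩
  have hmeet : ∀ s : ℕ → P, IsRay (HasseM M') s → ∃ C i j, s i = r C j := by
    intro s hs
    set C : RayClasses (HasseM M') :=
      ⟨{u | IsRay (HasseM M') u ∧ RayEquiv s u}, ⟨s, hs, rfl⟩⟩ with hCdef
    have hsC : s ∈ (C : Set (ℕ → P)) := ⟨hs, rayEquiv_refl s⟩
    rw [hρC C] at hsC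
    obtain ⟨A, B, hAB⟩ := hsC.2
    refine ⟨C, B + t C, A, ?_⟩
    have h := hAB (t C)
    rw [← h]
    exact congrArg (ρ C) (Nat.add_comm A (t C))
  refine ⟨Surg M' r, ⟨htf.matching hgraded h1 hmatch', htf.acyclic hgraded h1 hmatch' hacyc'⟩,
    htf.rayless hgraded h1 hmatch' hmeet, fun C => r C 0, ?_, ?_, ?_, ?_⟩
  · intro C C' h
    by_contra hne
    exact htf.cross C C' hne 0 0 h
  · intro C hc
    have hmem : (r C (2*0+1), r C (2*0)) ∈ M' := (htf.key C 0).1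
    exact (hc _ hmem).2 (show r C (2*0) = r C 0 from by norm_num)
  · intro C
    have h := (htf.key C 0).2.2.2
    simpa using h
  · exact htf.crit hgraded h1 hmatch'
end

section
/- Let P be a graded poset in which every element has degree at most 1 and every element of degree 1 covers exactly two distinct elements of degree 0 (the face poset of a 1-dimensional regular CW-complex), and let N be a Morse matching on P. Then no ray r = (r₀, r₁, …) in H_N(P) with deg(r₀) equal to the degree of r has a bypass. -/
section Aux

variable {P : Type*} [PartialOrder P]

lemma exists_maxChainIn_s8 (x : P) (C : Set P) (hC : IsChainIn x C) :
    ∃ D, C ⊆ D ∧ IsMaxChainIn x D := by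
  have hside : ∀ c ⊆ {E | IsChainIn x E}, IsChain (· ⊆ ·) c → c.Nonempty →
      ∃ ub ∈ {E | IsChainIn x E}, ∀ s ∈ c, s ⊆ ub := by
    intro c hc hchain _
    refine ⟨⋃₀ c, ⟨?_, ?_⟩, fun s hs => Set.subset_sUnion_of_mem hs⟩
    · rintro a ⟨s, hs, has⟩; exact (hc hs).1 has
    · rintro a ⟨s, hs, has⟩ b ⟨t, ht, hbt⟩ hab
      rcases hchain.total hs ht with h | h
      · exact (hc ht).2 (h has) hbt hab
      · exact (hc hs).2 has (h hbt) hab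
  obtain ⟨D, hCD, hD⟩ := zorn_subset_nonempty {E | IsChainIn x E} hside C hC
  exact ⟨D, hCD, hD.1, fun E hE hDE => subset_antisymm hDE (hD.2 hE hDE)⟩

lemma mem_of_maxChainIn {x : P} {D : Set P} (h : IsMaxChainIn x D) : x ∈ D := by
  have hins : IsChainIn x (insert x D) := by
    refine ⟨Set.insert_subset le_rfl h.1.1, h.1.2.insert fun b hb _ => Or.inr (h.1.1 hb)⟩
  have := h.2 _ hins (Set.subset_insert _ _)
  rw [this]; exact Set.mem_insert _ _

lemma deg_zero_not_covby {deg : P → ℕ} (hgraded : GradedDeg deg) {x y : P}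
    (h0 : deg x = 0) (hyx : y ⋖ x) : False := by
  have hchain : IsChainIn x {y, x} := by
    refine ⟨?_, IsChain.pair hyx.le⟩
    rintro a (rfl | rfl)
    · exact hyx.le
    · exact le_rfl
  obtain ⟨D, hsub, hmax⟩ := exists_maxChainIn_s8 x _ hchain
  obtain ⟨hfin, hcard⟩ := hgraded x D hmax
  have h2 : 2 ≤ D.ncard := by
    have := Set.ncard_le_ncard hsub hfin
    rwa [Set.ncard_pair hyx.ne] at this
  omega

lemma deg_one_not_covby {deg : P → ℕ} (hgraded : GradedDeg deg)
    (hle : ∀ z : P, deg z ≤ 1) {x y : P} (h0 : deg x = 1) (hxy : x ⋖ y) : False := by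
  have hchain : IsChainIn x {x} := ⟨by simp, Set.Subsingleton.isChain (by simp)⟩
  obtain ⟨D, hsub, hmax⟩ := exists_maxChainIn_s8 x _ hchain
  obtain ⟨hfin, hcard⟩ := hgraded x D hmax
  have hyD : y ∉ D := fun hy => absurd (Set.mem_Iic.mp (hmax.1.1 hy)) hxy.lt.not_ge
  have hchain' : IsChainIn y (insert y D) := by
    refine ⟨Set.insert_subset le_rfl (fun a ha => (hmax.1.1 ha).trans hxy.le), ?_⟩
    exact hmax.1.2.insert fun b hb _ => Or.inr ((hmax.1.1 hb).trans hxy.le)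
  obtain ⟨E, hsub', hmax'⟩ := exists_maxChainIn_s8 y _ hchain'
  obtain ⟨hfin', hcard'⟩ := hgraded y E hmax'
  have h3 : 3 ≤ E.ncard := by
    have h1 : (insert y D).ncard = D.ncard + 1 := Set.ncard_insert_of_notMem hyD hfin
    have := Set.ncard_le_ncard hsub' hfin'
    omega
  have := hle y
  omega

/-- On the ray, the out-arrow is unique. -/
lemma ray_unique_out {deg : P → ℕ} (hgraded : GradedDeg deg) (h1 : OneDim deg)
    {N : Set (P × P)} (hN : IsMorse N) {r : ℕ → P} (hr : IsRay (HasseM N) r)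
    (hd : deg (r 0) = rayDeg deg r) :
    ∀ j : ℕ, ∀ z : P, HasseM N (r j) z → z = r (j + 1) := by
  have hle := h1.1
  have hcov : ∀ e ∈ N, e.2 ⋖ e.1 := hN.1.1
  -- step from a degree-0 vertex
  have step0 : ∀ j, deg (r j) = 0 → (r (j+1), r j) ∈ N ∧ deg (r (j+1)) = 1 := by
    intro j hj
    rcases hr.2 j with ⟨hc, -⟩ | hm
    · exact absurd (deg_zero_not_covby hgraded hj hc) id
    · refine ⟨hm, ?_⟩
      have hcv : r j ⋖ r (j+1) := hcov _ hm
      rcases Nat.le_one_iff_eq_zero_or_eq_one.mp (hle (r (j+1))) with h | h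
      · exact absurd (deg_zero_not_covby hgraded h hcv) id
      · exact h
  -- step from a degree-1 vertex
  have step1 : ∀ j, deg (r j) = 1 →
      (r (j+1) ⋖ r j ∧ (r j, r (j+1)) ∉ N ∧ deg (r (j+1)) = 0) := by
    intro j hj
    rcases hr.2 j with ⟨hc, hnm⟩ | hm
    · refine ⟨hc, hnm, ?_⟩
      rcases Nat.le_one_iff_eq_zero_or_eq_one.mp (hle (r (j+1))) with h | h
      · exact h
      · exact absurd (deg_one_not_covby hgraded hle h hc) id
    · exact absurd (deg_one_not_covby hgraded hle hj (hcov _ hm)) id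
  -- the ray starts at degree 0
  have hd0 : deg (r 0) = 0 := by
    rcases Nat.le_one_iff_eq_zero_or_eq_one.mp (hle (r 0)) with h | h
    · exact h
    · exfalso
      have h10 := step1 0 h
      have hmem : (0 : ℕ) ∈ {i | ∃ j : ℕ, deg (r j) = i} := ⟨1, h10.2.2⟩
      have := Nat.sInf_le hmem
      rw [hd] at h
      unfold rayDeg at h
      omega
  intro j z hz
  rcases Nat.le_one_iff_eq_zero_or_eq_one.mp (hle (r j)) with hj | hj
  · -- degree 0: unique matched up-arrow
    obtain ⟨hm, -⟩ := step0 j hj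
    rcases hz with ⟨hc, -⟩ | hm'
    · exact absurd (deg_zero_not_covby hgraded hj hc) id
    · by_contra hne
      have : (z, r j) ≠ (r (j+1), r j) := fun h => hne (congrArg Prod.fst h)
      exact (hN.1.2 _ hm' _ hm this).2.2.2 rfl
  · -- degree 1
    obtain ⟨j', rfl⟩ : ∃ j', j = j' + 1 := by
      cases j with
      | zero => exfalso; rw [hd0] at hj; omega
      | succ j' => exact ⟨j', rfl⟩
    have hj' : deg (r j') = 0 := by
      rcases Nat.le_one_iff_eq_zero_or_eq_one.mp (hle (r j')) with h | h
      · exact h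
      · exfalso; have := (step1 j' h).2.2; omega
    have hmprev : (r (j' + 1), r j') ∈ N := (step0 j' hj').1
    -- the arrow to z goes down and is unmatched
    obtain ⟨hzc, hzn⟩ : z ⋖ r (j'+1) ∧ (r (j'+1), z) ∉ N := by
      rcases hz with ⟨hc, hnm⟩ | hm
      · exact ⟨hc, hnm⟩
      · exact absurd (deg_one_not_covby hgraded hle hj (hcov _ hm)) id
    obtain ⟨hnc, hnn, -⟩ := step1 (j'+1) hj
    -- z and r (j'+2) are both the covered element distinct from r j'
    obtain ⟨a, b, hab, -, -, -, -, huniq⟩ := h1.2 (r (j'+1)) hj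
    have hprev_cov : r j' ⋖ r (j'+1) := hcov _ hmprev
    have hz_ne : z ≠ r j' := fun h => hzn (h ▸ hmprev)
    have hn_ne : r (j'+1+1) ≠ r j' := fun h => hnn (h ▸ hmprev)
    rcases huniq _ hzc with rfl | rfl <;> rcases huniq _ hnc with h2 | h2 <;>
      rcases huniq _ hprev_cov with h3 | h3 <;> simp_all

end Aux

/-- on the face poset of a 1-dimensional regular CW-complex, no ray
`r` of a Morse matching `N` with `deg (r 0)` equal to the degree of `r` has a
bypass. -/
theorem stmt8 {P : Type*} [PartialOrder P] (deg : P → ℕ) (hgraded : GradedDeg deg)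
    (h1 : OneDim deg) (N : Set (P × P)) (hN : IsMorse N) (r : ℕ → P)
    (hr : IsRay (HasseM N) r) (hd : deg (r 0) = rayDeg deg r) :
    ∀ n : ℕ, ¬ HasBypassAt (HasseM N) r n := by
  intro n hb
  obtain ⟨k, -, m, p, hpath, h0, -, i, him, hne⟩ := hb
  have huniq := ray_unique_out hgraded h1 hN hr hd
  have key : ∀ i, i ≤ m → p i = r (n + i) := by
    intro i hi
    induction i with
    | zero => simpa using h0
    | succ i ih =>
      have harrow := hpath.2 i (by omega)
      rw [ih (by omega)] at harrow
      have := huniq (n + i) _ harrow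
      rw [this]; ring_nf
  exact hne (n + i) (key i him)
end

section
/- Let M be a Morse matching on a graded poset P and let r = (r₀, r₁, r₂, …) be a ray in H_M(P). Set i₀ = min{i : deg(r_j) = i for some j ∈ ℕ} and j₀ = min{j : deg(r_j) = i₀}. Then for every j ≥ j₀ the degree of r_j is either i₀ or i₀ + 1. -/
/-- Every principal ideal contains a maximal chain. -/
theorem exists_isMaxChainIn {P : Type*} [PartialOrder P] (x : P) :
    ∃ C : Set P, IsMaxChainIn x C := by
  have hx : ({x} : Set P) ∈ {C : Set P | IsChainIn x C} := by
    constructor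
    · intro a ha; simp only [Set.mem_singleton_iff] at ha; simp [ha]
    · exact Set.Subsingleton.isChain (Set.subsingleton_singleton)
  have H : ∀ c ⊆ {C : Set P | IsChainIn x C}, IsChain (· ⊆ ·) c → c.Nonempty →
      ∃ ub ∈ {C : Set P | IsChainIn x C}, ∀ s ∈ c, s ⊆ ub := by
    intro c hcS hc hne
    refine ⟨⋃₀ c, ⟨?_, ?_⟩, fun s hs => Set.subset_sUnion_of_mem hs⟩
    · intro a ha
      obtain ⟨s, hs, has⟩ := ha
      exact (hcS hs).1 has
    · intro a ha b hb hab
      obtain ⟨s, hs, has⟩ := ha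
      obtain ⟨t, ht, hbt⟩ := hb
      rcases eq_or_ne s t with rfl | hst
      · exact (hcS hs).2 has hbt hab
      · rcases hc hs ht hst with h | h
        · exact (hcS ht).2 (h has) hbt hab
        · exact (hcS hs).2 has (h hbt) hab
  obtain ⟨m, -, hm⟩ := zorn_subset_nonempty {C : Set P | IsChainIn x C} H _ hx
  exact ⟨m, hm.1, fun D hD hsub => Set.Subset.antisymm hsub (hm.2 hD hsub)⟩

/-- A maximal chain in `x↓` contains `x`. -/
theorem mem_of_isMaxChainIn {P : Type*} [PartialOrder P] {x : P} {C : Set P}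
    (hC : IsMaxChainIn x C) : x ∈ C := by
  have h : IsChainIn x (insert x C) := by
    refine ⟨Set.insert_subset (le_refl x) hC.1.1, ?_⟩
    intro a ha b hb hab
    rcases ha with rfl | ha
    · rcases hb with rfl | hb
      · exact absurd rfl hab
      · exact Or.inr (hC.1.1 hb)
    · rcases hb with rfl | hb
      · exact Or.inl (hC.1.1 ha)
      · exact hC.1.2 ha hb hab
  have := hC.2 _ h (Set.subset_insert x C)
  rw [this]; exact Set.mem_insert x C

/-- In a graded poset, covers increase degree by exactly one. -/
theorem deg_covBy {P : Type*} [PartialOrder P] {deg : P → ℕ} (hgraded : GradedDeg deg)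
    {x y : P} (h : y ⋖ x) : deg x = deg y + 1 := by
  obtain ⟨C, hC⟩ := exists_isMaxChainIn y
  have hyC : y ∈ C := mem_of_isMaxChainIn hC
  have hxC : x ∉ C := fun hx => absurd (hC.1.1 hx) (not_le_of_gt h.lt)
  have hCx : IsMaxChainIn x (insert x C) := by
    refine ⟨⟨Set.insert_subset (le_refl x) (fun a ha => le_trans (hC.1.1 ha) h.le), ?_⟩, ?_⟩
    · intro a ha b hb hab
      rcases ha with rfl | ha
      · rcases hb with rfl | hb
        · exact absurd rfl hab
        · exact Or.inr (le_trans (hC.1.1 hb) h.le)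
      · rcases hb with rfl | hb
        · exact Or.inl (le_trans (hC.1.1 ha) h.le)
        · exact hC.1.2 ha hb hab
    · intro D hD hsub
      refine Set.Subset.antisymm hsub (fun d hd => ?_)
      rcases eq_or_ne d x with rfl | hdx
      · exact Set.mem_insert _ _
      have hdlt : d < x := lt_of_le_of_ne (hD.1 hd) hdx
      have hdy : d ≤ y := by
        rcases eq_or_ne d y with rfl | hdy
        · exact le_refl d
        rcases hD.2 hd (hsub (Set.mem_insert_of_mem _ hyC)) hdy with h1 | h1
        · exact h1
        · exact absurd hdlt (h.2 (lt_of_le_of_ne h1 (Ne.symm hdy)))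
      have hChain : IsChainIn y (insert d C) := by
        refine ⟨Set.insert_subset hdy hC.1.1, ?_⟩
        intro a ha b hb hab
        rcases ha with rfl | ha
        · rcases hb with rfl | hb
          · exact absurd rfl hab
          · exact hD.2 hd (hsub (Set.mem_insert_of_mem _ hb)) hab
        · rcases hb with rfl | hb
          · exact hD.2 (hsub (Set.mem_insert_of_mem _ ha)) hd hab
          · exact hC.1.2 ha hb hab
      have hCeq := hC.2 _ hChain (Set.subset_insert d C)
      have hdC : d ∈ C := by rw [hCeq]; exact Set.mem_insert d C
      exact Set.mem_insert_of_mem x hdC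
  obtain ⟨hCfin, hCcard⟩ := hgraded y C hC
  obtain ⟨-, hCxcard⟩ := hgraded x _ hCx
  rw [Set.ncard_insert_of_notMem hxC hCfin, hCcard] at hCxcard
  omega

theorem no_double_up {P : Type*} [PartialOrder P] {M : Set (P × P)} (hM : IsMatching M)
    {a b c : P} (h1 : (b, a) ∈ M) (h2 : (c, b) ∈ M) : False := by
  rcases eq_or_ne ((b, a) : P × P) (c, b) with heq | hne
  · have : a ⋖ b := hM.1 _ h1
    have hab : b = c ∧ a = b := Prod.mk.injEq .. ▸ (by simpa using heq)
    exact absurd hab.2.symm this.lt.ne'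
  · exact absurd rfl (hM.2 _ h1 _ h2 hne).2.1

/-- along a ray `r` of a Morse matching, from the first index `j₀`
where the minimal degree `i₀` is attained onwards, every element has degree `i₀`
or `i₀ + 1`. -/
theorem stmt10 {P : Type*} [PartialOrder P] (deg : P → ℕ) (hgraded : GradedDeg deg)
    (M : Set (P × P)) (hM : IsMorse M) (r : ℕ → P) (hr : IsRay (HasseM M) r) :
    ∀ j : ℕ, sInf {j' : ℕ | deg (r j') = sInf {i : ℕ | ∃ k : ℕ, deg (r k) = i}} ≤ j →
      deg (r j) = sInf {i : ℕ | ∃ k : ℕ, deg (r k) = i} ∨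
      deg (r j) = sInf {i : ℕ | ∃ k : ℕ, deg (r k) = i} + 1 := by
  set i₀ := sInf {i : ℕ | ∃ k : ℕ, deg (r k) = i} with hi₀
  set j₀ := sInf {j' : ℕ | deg (r j') = i₀} with hj₀
  have hS1 : {i : ℕ | ∃ k : ℕ, deg (r k) = i}.Nonempty := ⟨deg (r 0), 0, rfl⟩
  have hi₀mem : i₀ ∈ {i : ℕ | ∃ k : ℕ, deg (r k) = i} := Nat.sInf_mem hS1
  obtain ⟨k₀, hk₀⟩ := hi₀mem
  have hj₀deg : deg (r j₀) = i₀ := Nat.sInf_mem (⟨k₀, hk₀⟩ : {j' : ℕ | deg (r j') = i₀}.Nonempty)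
  have hlb : ∀ j : ℕ, i₀ ≤ deg (r j) := fun j => Nat.sInf_le ⟨j, rfl⟩
  have key : ∀ j : ℕ, j₀ ≤ j → deg (r j) = i₀ ∨
      (deg (r j) = i₀ + 1 ∧ ∃ j', j = j' + 1 ∧ (r j, r j') ∈ M) := by
    intro j hj
    induction j, hj using Nat.le_induction with
    | base => exact Or.inl hj₀deg
    | succ j hj ih =>
      rcases hr.2 j with ⟨hcov, -⟩ | hup
      · -- downward arrow: deg (r j) = deg (r (j+1)) + 1
        have hd : deg (r j) = deg (r (j + 1)) + 1 := deg_covBy hgraded hcov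
        rcases ih with h | ⟨h, -⟩
        · exact absurd (hlb (j + 1)) (by omega)
        · exact Or.inl (by omega)
      · -- upward arrow: (r (j+1), r j) ∈ M
        have hcov : r j ⋖ r (j + 1) := hM.1.1 _ hup
        have hd : deg (r (j + 1)) = deg (r j) + 1 := deg_covBy hgraded hcov
        rcases ih with h | ⟨-, j', -, hM'⟩
        · exact Or.inr ⟨by omega, j, rfl, hup⟩
        · exact absurd hM' (fun hM' => no_double_up hM.1 hM' hup)
  intro j hj
  rcases key j hj with h | ⟨h, -⟩
  · exact Or.inl h
  · exact Or.inr h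
end

section
/- Let P be a graded poset with finite principal ideals and let M be a rayless Morse matching on P. Then there exists a function f : P → ℝ such that: (i) for every x ∈ P, each of the sets u_f(x) = {y ∈ P : y covers x and f(y) ≤ f(x)} and d_f(x) = {y ∈ P : x covers y and f(y) ≥ f(x)} has at most one element (f is a discrete Morse function); (ii) the set of Hasse-diagram arrows {(z, x) : z covers x and f(z) ≤ f(x)} is exactly the matching M (f induces the matching M); and (iii) f(c) = deg(c) for every critical element c of M (f is self-indexing). -/
lemma exists_cycle_of_closedWalk {V : Type*} (A : V → V → Prop) :
    ∀ n : ℕ, 0 < n → ∀ w : ℕ → V, (∀ i, i < n → A (w i) (w (i + 1))) → w n = w 0 →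
      ∃ (m : ℕ) (p : ℕ → V), IsPathOn A m p ∧ A (p m) (p 0) := by
  intro n
  induction n using Nat.strong_induction_on with
  | _ n ih =>
    intro hn w hw hcl
    by_cases hrep : ∃ i j, i < j ∧ j < n ∧ w i = w j
    · obtain ⟨i, j, hij, hjn, he⟩ := hrep
      refine ih (j - i) (by omega) (by omega) (fun k => w (i + k)) (fun k hk => ?_) ?_
      · have := hw (i + k) (by omega)
        simpa [Nat.add_assoc] using this
      · show w (i + (j - i)) = w (i + 0)
        have h1 : i + (j - i) = j := by omega
        rw [h1, Nat.add_zero, ← he]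
    · push_neg at hrep
      refine ⟨n - 1, w, ⟨?_, fun i hi => hw i (by omega)⟩, ?_⟩
      · intro a b ha hb hab
        by_contra hne
        rcases Nat.lt_or_ge a b with h | h
        · exact hrep a b h (by omega) hab
        · exact hrep b a (by omega) (by omega) hab.symm
      · have h1 : n - 1 + 1 = n := by omega
        have := hw (n - 1) (by omega)
        rw [h1] at this
        rwa [hcl] at this

lemma no_infinite_walk {V : Type*} {A : V → V → Prop} (hac : DAcyclic A) (hray : Rayless A)
    (w : ℕ → V) (hw : ∀ i, A (w i) (w (i + 1))) : False := by
  by_cases hinj : Function.Injective w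
  · exact hray ⟨w, hinj, hw⟩
  · have : ∃ a b, w a = w b ∧ a ≠ b := by
      simp only [Function.Injective, not_forall] at hinj
      obtain ⟨a, b, h1, h2⟩ := hinj
      exact ⟨a, b, h1, h2⟩
    obtain ⟨a, b, he, hne⟩ := this
    apply hac
    rcases Nat.lt_or_ge a b with h | h
    · refine exists_cycle_of_closedWalk A (b - a) (by omega) (fun k => w (a + k))
        (fun k hk => by simpa [Nat.add_assoc] using hw (a + k)) ?_
      show w (a + (b - a)) = w (a + 0)
      have h1 : a + (b - a) = b := by omega
      rw [h1, Nat.add_zero, ← he]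
    · refine exists_cycle_of_closedWalk A (a - b) (by omega) (fun k => w (b + k))
        (fun k hk => by simpa [Nat.add_assoc] using hw (b + k)) ?_
      show w (b + (a - b)) = w (b + 0)
      have h1 : b + (a - b) = a := by omega
      rw [h1, Nat.add_zero, he]

noncomputable def wrank {α : Type*} {r : α → α → Prop} (hwf : WellFounded r)
    (hf : ∀ a, {b | r b a}.Finite) : α → ℕ :=
  hwf.fix fun a ih => (hf a).toFinset.attach.sup fun b => ih b.1 ((hf a).mem_toFinset.mp b.2) + 1

lemma wrank_lt {α : Type*} {r : α → α → Prop} (hwf : WellFounded r)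
    (hf : ∀ a, {b | r b a}.Finite) {a b : α} (h : r b a) :
    wrank hwf hf b < wrank hwf hf a := by
  have key : wrank hwf hf a
      = (hf a).toFinset.attach.sup (fun b => wrank hwf hf b.1 + 1) :=
    hwf.fix_eq _ a
  rw [key]
  have hb : b ∈ (hf a).toFinset := (hf a).mem_toFinset.mpr h
  have := Finset.le_sup (f := fun c : {x // x ∈ (hf a).toFinset} => wrank hwf hf c.1 + 1)
    (Finset.mem_attach _ ⟨b, hb⟩)
  simp only [] at this
  omega

noncomputable def dl (n : ℕ) : ℝ := 1/4 - 1/(4*n+4)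

lemma dl_nonneg (n : ℕ) : 0 ≤ dl n := by
  have h1 : (1:ℝ)/(4*n+4) ≤ 1/4 := by
    apply div_le_div_of_nonneg_left (by norm_num) (by norm_num)
    have : (0:ℝ) ≤ n := Nat.cast_nonneg n
    linarith
  simp only [dl]; linarith

lemma dl_lt (n : ℕ) : dl n < 1/4 := by
  have h1 : (0:ℝ) < 1/(4*n+4) := by positivity
  simp only [dl]; linarith

lemma dl_mono {m n : ℕ} (h : m < n) : dl m < dl n := by
  have hm : (0:ℝ) < 4*m+4 := by positivity
  have hc : (m:ℝ) < n := by exact_mod_cast h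
  have h2 : (1:ℝ)/(4*n+4) < 1/(4*m+4) := by
    apply one_div_lt_one_div_of_lt hm
    linarith
  simp only [dl]; linarith

open Classical in
noncomputable def morseF {P : Type*} [PartialOrder P] (deg : P → ℕ) (M : Set (P × P))
    (rank : {e : P × P // e ∈ M} → ℕ) (x : P) : ℝ :=
  if h1 : ∃ e : {e : P × P // e ∈ M}, e.1.2 = x then
    (deg x : ℝ) + 1/2 + dl (rank h1.choose)
  else if h2 : ∃ e : {e : P × P // e ∈ M}, e.1.1 = x then
    (deg x : ℝ) - 1/2 + dl (rank h2.choose)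
  else (deg x : ℝ)

/-- every rayless Morse matching `M` on a graded poset with finite
principal ideals is induced by a self-indexing discrete Morse function:
there is `f : P → ℝ` such that (i) for each `x` the sets
`u_f(x) = {y : y ⋗ x, f y ≤ f x}` and `d_f(x) = {y : y ⋖ x, f y ≥ f x}` each
have at most one element, (ii) the set of Hasse arrows `(z, x)` with `z ⋗ x` and
`f z ≤ f x` is exactly `M`, and (iii) `f c = deg c` for every critical `c`. -/
theorem stmt17 {P : Type*} [PartialOrder P] (deg : P → ℕ)
    (hgraded : GradedDeg deg) (hfin : ∀ x : P, (Set.Iic x).Finite)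
    (M : Set (P × P)) (hM : IsMorse M) (hrayless : Rayless (HasseM M)) :
    ∃ f : P → ℝ,
      (∀ x : P, {y : P | x ⋖ y ∧ f y ≤ f x}.Subsingleton ∧
        {y : P | y ⋖ x ∧ f x ≤ f y}.Subsingleton) ∧
      {e : P × P | e.2 ⋖ e.1 ∧ f e.1 ≤ f e.2} = M ∧
      (∀ c : P, Critical M c → f c = (deg c : ℝ)) := by
  classical
  obtain ⟨⟨hcov, hdisj⟩, hac⟩ := hM
  -- basic matching facts
  have huniq_fst : ∀ e ∈ M, ∀ e' ∈ M, e.1 = e'.1 → e = e' := by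
    intro e he e' he' h
    by_contra hne
    exact (hdisj e he e' he' hne).1 h
  have huniq_snd : ∀ e ∈ M, ∀ e' ∈ M, e.2 = e'.2 → e = e' := by
    intro e he e' he' h
    by_contra hne
    exact (hdisj e he e' he' hne).2.2.2 h
  have hne_ul : ∀ e ∈ M, ∀ e' ∈ M, e.1 ≠ e'.2 := by
    intro e he e' he'
    by_cases h : e = e'
    · subst h
      intro hh
      have hl := (hcov e he).lt
      rw [hh] at hl
      exact lt_irrefl _ hl
    · exact (hdisj e he e' he' h).2.1
  -- maximal chains and degrees of covers
  have hmaxchain : ∀ x : P, ∃ C : Set P, IsMaxChainIn x C ∧ x ∈ C := by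
    intro x
    have hfinS : {C : Set P | IsChainIn x C}.Finite :=
      Set.Finite.subset (hfin x).finite_subsets (fun C hC => hC.1)
    obtain ⟨C, hC, hmax⟩ := Set.Finite.exists_maximalFor id _ hfinS
      ⟨∅, Set.empty_subset _, IsChain.empty⟩
    have hmax' : ∀ D : Set P, IsChainIn x D → C ⊆ D → C = D := fun D hD hsub => Set.Subset.antisymm hsub (hmax hD hsub)
    refine ⟨C, ⟨hC, hmax'⟩, ?_⟩
    have hins : IsChainIn x (insert x C) := by
      constructor
      · exact Set.insert_subset (Set.mem_Iic.mpr le_rfl) hC.1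
      · exact hC.2.insert fun b hb _ => Or.inr (Set.mem_Iic.mp (hC.1 hb))
    have := hmax' _ hins (Set.subset_insert x C)
    rw [this]
    exact Set.mem_insert _ _
  have hcov_deg : ∀ x z : P, x ⋖ z → deg z = deg x + 1 := by
    intro x z hxz
    obtain ⟨C, ⟨hCchain, hCmax⟩, hxC⟩ := hmaxchain x
    have hzC : z ∉ C := fun h => (Set.mem_Iic.mp (hCchain.1 h)).not_gt hxz.lt
    have hchain' : IsChainIn z (insert z C) := by
      constructor
      · exact Set.insert_subset (Set.mem_Iic.mpr le_rfl)
          (fun c hc => Set.mem_Iic.mpr (le_trans (Set.mem_Iic.mp (hCchain.1 hc)) hxz.le))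
      · exact hCchain.2.insert fun b hb _ =>
          Or.inr (le_trans (Set.mem_Iic.mp (hCchain.1 hb)) hxz.le)
    have hmax' : IsMaxChainIn z (insert z C) := by
      refine ⟨hchain', fun D hD hsub => ?_⟩
      apply Set.Subset.antisymm hsub
      intro d hd
      have hdz : d ≤ z := Set.mem_Iic.mp (hD.1 hd)
      have hxD : x ∈ D := hsub (Set.mem_insert_of_mem _ hxC)
      have hcomp : d ≤ x ∨ x ≤ d := by
        rcases eq_or_ne d x with rfl | hne
        · exact Or.inl le_rfl
        · rcases hD.2 hd hxD hne with h | h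
          · exact Or.inl h
          · exact Or.inr h
      rcases hcomp with h | h
      · have hDx : IsChainIn x (D ∩ Set.Iic x) :=
          ⟨Set.inter_subset_right, hD.2.mono Set.inter_subset_left⟩
        have hCD : C ⊆ D ∩ Set.Iic x := fun c hc =>
          ⟨hsub (Set.mem_insert_of_mem _ hc), hCchain.1 hc⟩
        have hCeq := hCmax _ hDx hCD
        apply Set.mem_insert_of_mem
        rw [hCeq]
        exact ⟨hd, Set.mem_Iic.mpr h⟩
      · rcases eq_or_lt_of_le h with rfl | hlt
        · exact Set.mem_insert_of_mem _ hxC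
        · have hdzeq : d = z := by
            rcases eq_or_lt_of_le hdz with h' | h'
            · exact h'
            · exact absurd h' (hxz.2 hlt)
          rw [hdzeq]
          exact Set.mem_insert _ _
    obtain ⟨hCfin, hCcard⟩ := hgraded x C ⟨hCchain, hCmax⟩
    obtain ⟨hfin', hcard'⟩ := hgraded z _ hmax'
    rw [Set.ncard_insert_of_notMem hzC hCfin, hCcard] at hcard'
    omega
  -- the rank relation on matched edges
  set α := {e : P × P // e ∈ M} with hα
  set r : α → α → Prop := fun e' e => e'.1.2 ⋖ e.1.1 ∧ e' ≠ e with hr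
  have hfinpred : ∀ e : α, {e' | r e' e}.Finite := by
    intro e
    apply Set.Finite.of_finite_image (f := fun e' : α => e'.1.2)
    · apply Set.Finite.subset (hfin e.1.1)
      rintro _ ⟨e', he', rfl⟩
      simp only [hr, Set.mem_setOf_eq] at he'
      exact Set.mem_Iic.mpr he'.1.lt.le
    · intro a ha b hb hab
      exact Subtype.ext (huniq_snd _ a.2 _ b.2 hab)
  have hwf : WellFounded r := by
    by_contra hnwf
    have hex : ∃ a : α, ¬ Acc r a := by
      by_contra hall
      push_neg at hall
      exact hnwf ⟨hall⟩
    obtain ⟨a0, ha0⟩ := hex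
    have step : ∀ x : {a : α // ¬ Acc r a}, ∃ y : {a : α // ¬ Acc r a}, r y.1 x.1 := by
      rintro ⟨x, hx⟩
      obtain ⟨b, hb1, hb2⟩ := exists_not_acc_lt_of_not_acc hx
      exact ⟨⟨b, hb1⟩, hb2⟩
    choose F hF using step
    set g : ℕ → α := fun n => (F^[n] ⟨a0, ha0⟩).1 with hgdef
    have hg : ∀ n : ℕ, r (g (n + 1)) (g n) := by
      intro n
      simp only [hgdef, Function.iterate_succ', Function.comp_apply]
      exact hF _
    simp only [hr] at hg
    set w : ℕ → P := fun n => if Even n then ((g (n/2)) : P × P).1 else ((g (n/2 + 1)) : P × P).2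
      with hwdef
    have hwe : ∀ k, w (2*k) = ((g k : P × P)).1 := by
      intro k
      have h : Even (2*k) := even_two_mul k
      simp only [hwdef, if_pos h]
      have h2 : 2*k/2 = k := by omega
      rw [h2]
    have hwo : ∀ k, w (2*k+1) = ((g (k+1) : P × P)).2 := by
      intro k
      have h : ¬ Even (2*k+1) := by rw [Nat.even_iff]; omega
      simp only [hwdef, if_neg h]
      have h2 : (2*k+1)/2 + 1 = k + 1 := by omega
      rw [h2]
    have harrow : ∀ n, HasseM M (w n) (w (n+1)) := by
      intro n
      rcases Nat.even_or_odd n with ⟨k, hk⟩ | ⟨k, hk⟩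
      · have hn : n = 2*k := by omega
        rw [hn, hwe, hwo]
        refine Or.inl ⟨(hg k).1, ?_⟩
        intro hmem
        have h3 := huniq_fst _ hmem _ (g k).2 rfl
        have h4 : ((g (k+1) : P × P)).2 = ((g k : P × P)).2 := by
          rw [← h3]
        have h5 : g (k+1) = g k := Subtype.ext (huniq_snd _ (g (k+1)).2 _ (g k).2 h4)
        exact (hg k).2 h5
      · have hn : n = 2*k+1 := by omega
        have hn1 : 2*k+1+1 = 2*(k+1) := by omega
        rw [hn, hn1, hwo, hwe]
        refine Or.inr ?_
        have := (g (k+1)).2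
        simpa using this
    exact no_infinite_walk hac hrayless w harrow
  set rank : α → ℕ := wrank hwf hfinpred with hrank
  set f : P → ℝ := morseF deg M rank with hf
  -- value lemmas
  have hflow : ∀ e : α, f e.1.2 = (deg e.1.2 : ℝ) + 1/2 + dl (rank e) := by
    intro e
    have h1 : ∃ e' : α, e'.1.2 = e.1.2 := ⟨e, rfl⟩
    have hc : h1.choose = e := Subtype.ext (huniq_snd _ h1.choose.2 _ e.2 h1.choose_spec)
    rw [hf]
    simp only [morseF]
    rw [dif_pos h1, hc]
  have hfup : ∀ e : α, f e.1.1 = (deg e.1.1 : ℝ) - 1/2 + dl (rank e) := by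
    intro e
    have h1 : ¬ ∃ e' : α, e'.1.2 = e.1.1 := by
      rintro ⟨e', he'⟩
      exact hne_ul _ e.2 _ e'.2 he'.symm
    have h2 : ∃ e' : α, e'.1.1 = e.1.1 := ⟨e, rfl⟩
    have hc : h2.choose = e := Subtype.ext (huniq_fst _ h2.choose.2 _ e.2 h2.choose_spec)
    rw [hf]
    simp only [morseF]
    rw [dif_neg h1, dif_pos h2, hc]
  have hfcrit : ∀ x : P, Critical M x → f x = (deg x : ℝ) := by
    intro x hx
    have h1 : ¬ ∃ e : α, e.1.2 = x := by
      rintro ⟨e, he⟩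
      exact (hx e.1 e.2).2 he
    have h2 : ¬ ∃ e : α, e.1.1 = x := by
      rintro ⟨e, he⟩
      exact (hx e.1 e.2).1 he
    rw [hf]
    simp only [morseF]
    rw [dif_neg h1, dif_neg h2]
  -- bounds
  have hub : ∀ y : P, f y < (deg y : ℝ) + 3/4 := by
    intro y
    rw [hf]
    simp only [morseF]
    split_ifs with h1 h2
    · have := dl_lt (rank h1.choose); linarith
    · have := dl_lt (rank h2.choose); linarith
    · linarith
  have hlb : ∀ y : P, (deg y : ℝ) - 1/2 ≤ f y := by
    intro y
    rw [hf]
    simp only [morseF]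
    split_ifs with h1 h2
    · have := dl_nonneg (rank h1.choose); linarith
    · have := dl_nonneg (rank h2.choose); linarith
    · linarith
  -- the key equivalence
  have hmain : ∀ x z : P, x ⋖ z → (f z ≤ f x ↔ (z, x) ∈ M) := by
    intro x z hxz
    have hdz : deg z = deg x + 1 := hcov_deg x z hxz
    constructor
    · intro hfz
      by_cases h1x : ∃ e : α, e.1.2 = x
      · obtain ⟨e', he'⟩ := h1x
        have hfx : f x = (deg x : ℝ) + 1/2 + dl (rank e') := by
          rw [← he']; exact hflow e'
        by_cases h2z : ∃ e : α, e.1.1 = z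
        · obtain ⟨e, he⟩ := h2z
          have hfzv : f z = (deg x : ℝ) + 1/2 + dl (rank e) := by
            have := hfup e
            rw [he, (show deg z = deg x + 1 from hdz)] at this
            push_cast at this
            rw [this]; ring
          have hrle : rank e ≤ rank e' := by
            by_contra hgt
            have := dl_mono (Nat.lt_of_not_le hgt)
            rw [hfx, hfzv] at hfz
            linarith
          by_cases heq : e = e'
          · have : (e : P × P) = (z, x) := by
              rw [Prod.ext_iff]
              exact ⟨he, by rw [heq, he']⟩
            rw [← this]
            exact e.2
          · have hre : r e' e := by
              rw [hr]
              exact ⟨by rw [he', he]; exact hxz, fun h => heq h.symm⟩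
            have := wrank_lt hwf hfinpred hre
            rw [← hrank] at this
            exfalso
            omega
        · -- z not an upper element: f z ≥ deg z
          exfalso
          have hzl : (deg z : ℝ) ≤ f z := by
            rw [hf]
            simp only [morseF]
            split_ifs with h1
            · have := dl_nonneg (rank h1.choose); linarith
            · linarith
          have := hub x
          have hdzr : (deg z : ℝ) = (deg x : ℝ) + 1 := by exact_mod_cast hdz
          linarith
      · -- x not a lower element: f x ≤ deg x, but f z ≥ deg z - 1/2 = deg x + 1/2
        exfalso
        have hxu : f x ≤ (deg x : ℝ) := by
          rw [hf]
          simp only [morseF]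
          split_ifs with ha hb
          · exact absurd ha h1x
          · have := dl_lt (rank hb.choose); linarith
          · linarith
        have := hlb z
        have hdzr : (deg z : ℝ) = (deg x : ℝ) + 1 := by exact_mod_cast hdz
        linarith
    · intro hzx
      have h1 : f x = (deg x : ℝ) + 1/2 + dl (rank ⟨(z, x), hzx⟩) := hflow ⟨(z, x), hzx⟩
      have h2 : f z = (deg z : ℝ) - 1/2 + dl (rank ⟨(z, x), hzx⟩) := hfup ⟨(z, x), hzx⟩
      have hdzr : (deg z : ℝ) = (deg x : ℝ) + 1 := by exact_mod_cast hdz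
      rw [h1, h2]
      linarith
  refine ⟨f, ?_, ?_, fun c hc => hfcrit c hc⟩
  · intro x
    constructor
    · intro y hy y' hy'
      have h1 : (y, x) ∈ M := (hmain x y hy.1).mp hy.2
      have h2 : (y', x) ∈ M := (hmain x y' hy'.1).mp hy'.2
      have := huniq_snd _ h1 _ h2 rfl
      exact congrArg Prod.fst this
    · intro y hy y' hy'
      have h1 : (x, y) ∈ M := (hmain y x hy.1).mp hy.2
      have h2 : (x, y') ∈ M := (hmain y' x hy'.1).mp hy'.2
      have := huniq_fst _ h1 _ h2 rfl
      exact congrArg Prod.snd this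
  · ext e
    simp only [Set.mem_setOf_eq]
    constructor
    · rintro ⟨hc, hle⟩
      have := (hmain e.2 e.1 hc).mp hle
      simpa using this
    · intro he
      have hc := hcov e he
      refine ⟨hc, (hmain e.2 e.1 hc).mpr ?_⟩
      simpa using he
end
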